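/- Let n be a natural number and let x, y : Fin n → EuclideanSpace ℝ (Fin 3) be point configurations such that dist (x i) (x j) = dist (y i) (y j) for all i, j ∈ Fin n. Then there exists a bijective isometry f of EuclideanSpace ℝ (Fin 3) such that y i = f (x i) for all i. (Reconstruction of the configuration, up to a rigid motion, from its distance matrix.) -/

import Mathlib

set_option maxHeartbeats 1000000

open scoped RealInnerProductSpace
open Module

local notation "E" => EuclideanSpace ℝ (Fin 3)

/-- If two point configurations in `ℝ³` have the same distance matrix,
then there is a bijective isometry of `ℝ³` carrying one onto the other
(reconstruction of the configuration, up to a rigid motion, from its distance matrix). -/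
theorem exists_isometryEquiv_of_dist_eq (n : ℕ)
    (x y : Fin n → EuclideanSpace ℝ (Fin 3))
    (h : ∀ i j, dist (x i) (x j) = dist (y i) (y j)) :
    ∃ f : EuclideanSpace ℝ (Fin 3) ≃ᵢ EuclideanSpace ℝ (Fin 3),
      ∀ i, y i = f (x i) := by
  rcases Nat.eq_zero_or_pos n with hn | hn
  · exact ⟨IsometryEquiv.refl E, fun i => absurd i.2 (by omega)⟩
  set i0 : Fin n := ⟨0, hn⟩ with hi0
  -- translate so that the base point is the origin
  set u : Fin n → E := fun i => x i - x i0 with hu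
  set v : Fin n → E := fun i => y i - y i0 with hv
  have hnorm : ∀ i j, ‖u i - u j‖ = ‖v i - v j‖ := by
    intro i j
    have : x i - x i0 - (x j - x i0) = x i - x j := by abel
    have h2 : y i - y i0 - (y j - y i0) = y i - y j := by abel
    rw [hu, hv]; simp only [this, h2, ← dist_eq_norm]; exact h i j
  have hnorm1 : ∀ i, ‖u i‖ = ‖v i‖ := by
    intro i
    simpa [dist_eq_norm] using h i i0
  have hinner : ∀ i j, ⟪u i, u j⟫ = ⟪v i, v j⟫ := by
    intro i j
    have h1 : ‖u i - u j‖ ^ 2 = ‖u i‖ ^ 2 - 2 * ⟪u i, u j⟫ + ‖u j‖ ^ 2 :=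
      norm_sub_sq_real _ _
    have h2 : ‖v i - v j‖ ^ 2 = ‖v i‖ ^ 2 - 2 * ⟪v i, v j⟫ + ‖v j‖ ^ 2 :=
      norm_sub_sq_real _ _
    rw [hnorm i j, h2] at h1
    rw [hnorm1 i, hnorm1 j] at h1
    linarith
  -- build a linear isometry on the span of the `u i`
  set S : Submodule ℝ E := Submodule.span ℝ (Set.range u) with hS
  obtain ⟨s, hsub, hspan, hlin⟩ := exists_linearIndependent ℝ (Set.range u)
  have hspanS : Submodule.span ℝ s = S := hspan
  -- basis of S from s
  let b₀ := Basis.span hlin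
  let e : Submodule.span ℝ (Set.range (Subtype.val : s → E)) ≃ₗ[ℝ] S :=
    LinearEquiv.ofEq _ _ (by rw [Subtype.range_coe, hspanS])
  let b : Basis s ℝ S := b₀.map e
  have hb : ∀ k : s, (b k : E) = (k : E) := by
    intro k
    have : (b₀ k : E) = (k : E) := congrArg Subtype.val (Basis.span_apply hlin k)
    simpa [b, e] using this
  -- choose indices for elements of s
  have hidx : ∀ k : s, ∃ i, u i = (k : E) := fun k => hsub k.2
  choose idx hidx using hidx
  -- the linear map on S
  let L : S →ₗ[ℝ] E := b.constr ℝ fun k => v (idx k)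
  have hLb : ∀ k : s, L (b k) = v (idx k) := fun k => b.constr_basis ℝ _ k
  -- L preserves inner products against each v i
  have hLv : ∀ i, ∀ w : S, ⟪L w, v i⟫ = ⟪(w : E), u i⟫ := by
    intro i
    have : ((innerₗ E) (v i)).comp L = ((innerₗ E) (u i)).comp S.subtype := by
      apply b.ext
      intro k
      simp only [LinearMap.comp_apply, hLb, Submodule.coe_subtype, innerₗ_apply_apply]
      rw [hb, ← hidx k]
      exact (hinner i (idx k)).symm
    intro w
    have := LinearMap.congr_fun this w
    simp only [LinearMap.comp_apply, innerₗ_apply_apply, Submodule.coe_subtype] at this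
    rw [real_inner_comm (v i) (L w), real_inner_comm (u i) ((w : E)), this]
  -- L preserves inner products
  have hLinner : ∀ w₁ w₂ : S, ⟪L w₁, L w₂⟫ = ⟪(w₁ : E), (w₂ : E)⟫ := by
    have : (innerₗ E).compl₁₂ L L =
        (innerₗ E).compl₁₂ S.subtype S.subtype := by
      apply LinearMap.ext_basis b b
      intro k l
      simp only [LinearMap.compl₁₂_apply, hLb, Submodule.coe_subtype, innerₗ_apply_apply, hb]
      rw [← hidx k, ← hidx l, hinner]
    intro w₁ w₂
    have := LinearMap.congr_fun (LinearMap.congr_fun this w₁) w₂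
    simpa using this
  -- L sends u i (as element of S) to v i
  have humem : ∀ i, u i ∈ S := fun i => Submodule.subset_span ⟨i, rfl⟩
  have hLu : ∀ i, L ⟨u i, humem i⟩ = v i := by
    intro i
    have hz : ‖L ⟨u i, humem i⟩ - v i‖ ^ 2 = 0 := by
      rw [norm_sub_sq_real]
      have h1 : ‖L ⟨u i, humem i⟩‖ ^ 2 = ‖u i‖ ^ 2 := by
        rw [← real_inner_self_eq_norm_sq, ← real_inner_self_eq_norm_sq, hLinner]
      have h2 : ⟪L ⟨u i, humem i⟩, v i⟫ = ⟪u i, u i⟫ := hLv i _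
      rw [h1, h2, real_inner_self_eq_norm_sq, ← hnorm1 i]
      ring
    have := pow_eq_zero_iff (n := 2) (by norm_num) |>.mp hz
    rw [norm_eq_zero] at this
    exact sub_eq_zero.mp this
  -- the isometry on S and its extension
  let Li : S →ₗᵢ[ℝ] E := L.isometryOfInner fun w₁ w₂ => by
    rw [hLinner]; rfl
  let Lext : E →ₗᵢ[ℝ] E := Li.extend
  have hLext : ∀ i, Lext (u i) = v i := by
    intro i
    have : (⟨u i, humem i⟩ : S) = (⟨u i, humem i⟩ : S) := rfl
    have := Li.extend_apply ⟨u i, humem i⟩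
    rw [this]
    show Li ⟨u i, humem i⟩ = v i
    show L ⟨u i, humem i⟩ = v i
    exact hLu i
  -- the bijective isometry
  let Le : E ≃ₗᵢ[ℝ] E := Lext.toLinearIsometryEquiv rfl
  let f : E ≃ᵢ E :=
    ((IsometryEquiv.subRight (x i0)).trans Le.toIsometryEquiv).trans
      (IsometryEquiv.addRight (y i0))
  refine ⟨f, fun i => ?_⟩
  show y i = Le (x i - x i0) + y i0
  have : Le (x i - x i0) = Lext (u i) := rfl
  rw [this, hLext i, hv]
  module
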